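/- Let α > 0, r₂ > 0, c₂ > 0 and q₂ ∈ (0,1). Define g : (0,∞) × (0,1) → ℝ by g(γ, p) = (r₂²/2)·(1 − p·q₂)·c₂ + γ·r₂ + α·r₂·[ (1/(2c₂r₂))·log( (2γ + c₂r₂(1−p))/(2γ) ) + p/(2·(2γ + c₂r₂(1−p))) ]. If (γ̂, p̂) ∈ (0,∞) × (0,1) is a point at which both partial derivatives ∂g/∂γ and ∂g/∂p vanish, then γ̂ = (√α/2)·((1 − p̂)/(1 − q₂))·√(q₂/p̂) and c₂ = (√α/r₂)·( (1/(1 − p̂))·√(p̂/q₂) − (1/(1 − q₂))·√(q₂/p̂) ). -/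

import Mathlib

theorem aux_c2 (c r p q sa ss st : ℝ) (hr : r ≠ 0) (hp : (1 - p) ≠ 0) (hq : (1 - q) ≠ 0)
    (hkey : c * r * (1 - p) = sa * ss - sa * ((1 - p) / (1 - q)) * st) :
    c = (sa / r) * ((1 / (1 - p)) * ss - (1 / (1 - q)) * st) := by
  field_simp at hkey ⊢
  linear_combination hkey

theorem aux_gd (γ d a p q : ℝ) (hq : (1 - q) ≠ 0)
    (E1 : a * (1 - p) = (1 - q) * (2 * γ * d)) :
    γ * d = a / 2 * ((1 - p) / (1 - q)) := by
  field_simp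
  linear_combination -E1



/-- Closed-form second-level relations: if `(γ̂, p̂)` is a stationary point of the
`(γ_sq, p₂)`-dependent part `g` of the second-level lifted random dual, then
`γ̂ = (√α/2)((1-p̂)/(1-q₂))√(q₂/p̂)` and
`c₂ = (√α/r₂)((1/(1-p̂))√(p̂/q₂) - (1/(1-q₂))√(q₂/p̂))`. -/
theorem stmt16 (α r₂ c₂ q₂ : ℝ) (hα : 0 < α) (hr : 0 < r₂) (hc : 0 < c₂)
    (hq : q₂ ∈ Set.Ioo (0:ℝ) 1)
    (g : ℝ → ℝ → ℝ)
    (hg : ∀ γ p, g γ p = (r₂ ^ 2 / 2) * (1 - p * q₂) * c₂ + γ * r₂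
      + α * r₂ * ((1 / (2 * c₂ * r₂)) *
          Real.log ((2 * γ + c₂ * r₂ * (1 - p)) / (2 * γ))
        + p / (2 * (2 * γ + c₂ * r₂ * (1 - p)))))
    (γhat phat : ℝ) (hγhat : 0 < γhat) (hphat : phat ∈ Set.Ioo (0:ℝ) 1)
    (h₁ : HasDerivAt (fun γ => g γ phat) 0 γhat)
    (h₂ : HasDerivAt (fun p => g γhat p) 0 phat) :
    γhat = (Real.sqrt α / 2) * ((1 - phat) / (1 - q₂)) * Real.sqrt (q₂ / phat) ∧
    c₂ = (Real.sqrt α / r₂) * ((1 / (1 - phat)) * Real.sqrt (phat / q₂)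
      - (1 / (1 - q₂)) * Real.sqrt (q₂ / phat)) := by
  obtain ⟨hq0, hq1⟩ := hq
  obtain ⟨hp0, hp1⟩ := hphat
  have hp1' : 0 < 1 - phat := by linarith
  have hq1' : 0 < 1 - q₂ := by linarith
  set D : ℝ := 2 * γhat + c₂ * r₂ * (1 - phat) with hDdef
  have hD : 0 < D := by positivity
  -- derivative in γ
  have hFγ : (fun γ => g γ phat) = (fun γ => (r₂ ^ 2 / 2) * (1 - phat * q₂) * c₂ + γ * r₂
      + α * r₂ * ((1 / (2 * c₂ * r₂)) *
          Real.log ((2 * γ + c₂ * r₂ * (1 - phat)) / (2 * γ))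
        + phat / (2 * (2 * γ + c₂ * r₂ * (1 - phat))))) := funext fun γ => hg γ phat
  rw [hFγ] at h₁
  have hV1 : r₂ * (1 - α * (1 - phat) / (2 * γhat * D) - α * phat / D ^ 2) = 0 := by
    have hlin : HasDerivAt (fun γ : ℝ => 2*γ + c₂ * r₂ * (1 - phat)) 2 γhat := by
      simpa using ((hasDerivAt_id γhat).const_mul 2).add_const (c₂ * r₂ * (1 - phat))
    have h2γ : HasDerivAt (fun γ : ℝ => 2*γ) 2 γhat := by
      simpa using (hasDerivAt_id γhat).const_mul 2
    have hlog := ((hlin.div h2γ (by positivity)).log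
      (div_pos hD (by positivity)).ne')
    have hden := hlin.const_mul 2
    have hratio := (hasDerivAt_const γhat phat).div hden (mul_pos two_pos hD).ne'
    have hF := ((hasDerivAt_const γhat ((r₂ ^ 2 / 2) * (1 - phat * q₂) * c₂)).add
      ((hasDerivAt_id γhat).mul_const r₂)).add
      (((hlog.const_mul (1 / (2 * c₂ * r₂))).add hratio).const_mul (α * r₂))
    have hF' : HasDerivAt (fun γ => (r₂ ^ 2 / 2) * (1 - phat * q₂) * c₂ + γ * r₂
      + α * r₂ * ((1 / (2 * c₂ * r₂)) *
          Real.log ((2 * γ + c₂ * r₂ * (1 - phat)) / (2 * γ))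
        + phat / (2 * (2 * γ + c₂ * r₂ * (1 - phat)))))
        (r₂ * (1 - α * (1 - phat) / (2 * γhat * D) - α * phat / D ^ 2)) γhat := by
      refine hF.congr_deriv ?_
      simp only [Pi.div_apply, id]
      rw [hDdef]
      field_simp
      ring
    exact hF'.unique h₁
  -- derivative in p
  have hFp : (fun p => g γhat p) = (fun p => (r₂ ^ 2 / 2) * (1 - p * q₂) * c₂ + γhat * r₂
      + α * r₂ * ((1 / (2 * c₂ * r₂)) *
          Real.log ((2 * γhat + c₂ * r₂ * (1 - p)) / (2 * γhat))
        + p / (2 * (2 * γhat + c₂ * r₂ * (1 - p))))) := funext fun p => hg γhat p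
  rw [hFp] at h₂
  have hV2 : (c₂ * r₂ ^ 2 / 2) * (α * phat / D ^ 2 - q₂) = 0 := by
    have hlin : HasDerivAt (fun p : ℝ => 2 * γhat + c₂ * r₂ * (1 - p)) (-(c₂ * r₂)) phat := by
      have h1 : HasDerivAt (fun p : ℝ => 1 - p) (-1) phat := by
        have := (hasDerivAt_const phat (1:ℝ)).sub (hasDerivAt_id phat)
        simp only [Pi.sub_def, id, zero_sub] at this
        exact this
      simpa using (h1.const_mul (c₂ * r₂)).const_add (2 * γhat)
    have hquot := hlin.div (hasDerivAt_const phat (2 * γhat)) (by positivity)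
    have hlog := hquot.log (div_pos hD (by positivity)).ne'
    have hden := hlin.const_mul 2
    have hratio := (hasDerivAt_id phat).div hden (mul_pos two_pos hD).ne'
    have hconst : HasDerivAt (fun p : ℝ => (r₂ ^ 2 / 2) * (1 - p * q₂) * c₂)
        ((r₂ ^ 2 / 2) * -q₂ * c₂) phat := by
      have h1 : HasDerivAt (fun p : ℝ => 1 - p * q₂) (-q₂) phat := by
        have := (hasDerivAt_const phat (1:ℝ)).sub ((hasDerivAt_id phat).mul_const q₂)
        simp only [Pi.sub_def, id, zero_sub, one_mul] at this
        exact this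
      exact (h1.const_mul (r₂ ^ 2 / 2)).mul_const c₂
    have hF := (hconst.add (hasDerivAt_const phat (γhat * r₂))).add
      (((hlog.const_mul (1 / (2 * c₂ * r₂))).add hratio).const_mul (α * r₂))
    have hF' : HasDerivAt (fun p => (r₂ ^ 2 / 2) * (1 - p * q₂) * c₂ + γhat * r₂
      + α * r₂ * ((1 / (2 * c₂ * r₂)) *
          Real.log ((2 * γhat + c₂ * r₂ * (1 - p)) / (2 * γhat))
        + p / (2 * (2 * γhat + c₂ * r₂ * (1 - p)))))
        ((c₂ * r₂ ^ 2 / 2) * (α * phat / D ^ 2 - q₂)) phat := by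
      refine hF.congr_deriv ?_
      simp only [Pi.div_apply, id]
      rw [hDdef]
      field_simp
      ring
    exact hF'.unique h₂
  -- algebraic equations
  have hD2 : D ^ 2 ≠ 0 := pow_ne_zero 2 hD.ne'
  have hqD : α * phat / D ^ 2 = q₂ := by
    rcases mul_eq_zero.mp hV2 with h' | h'
    · exact absurd h' (by positivity)
    · linarith [sub_eq_zero.mp h']
  have E2 : α * phat = q₂ * D ^ 2 := (div_eq_iff hD2).mp hqD
  have hX : 1 - α * (1 - phat) / (2 * γhat * D) - α * phat / D ^ 2 = 0 := by
    rcases mul_eq_zero.mp hV1 with h' | h'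
    · exact absurd h' hr.ne'
    · exact h'
  rw [hqD] at hX
  have hγD' : (2 : ℝ) * γhat * D ≠ 0 := by positivity
  have E1 : α * (1 - phat) = (1 - q₂) * (2 * γhat * D) :=
    (div_eq_iff hγD').mp (by linarith)
  -- square root facts
  have hαα : Real.sqrt α * Real.sqrt α = α := Real.mul_self_sqrt hα.le
  have hqp : Real.sqrt (q₂ / phat) * Real.sqrt (phat / q₂) = 1 := by
    rw [← Real.sqrt_mul (by positivity)]
    rw [show q₂ / phat * (phat / q₂) = 1 by field_simp]
    exact Real.sqrt_one
  have hDsq : D = Real.sqrt α * Real.sqrt (phat / q₂) := by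
    rw [← Real.sqrt_mul hα.le, ← Real.sqrt_sq hD.le]
    congr 1
    field_simp
    linear_combination -E2
  have hγD : γhat * D = α / 2 * ((1 - phat) / (1 - q₂)) :=
    aux_gd γhat D α phat q₂ hq1'.ne' E1
  have hRD : ((Real.sqrt α / 2) * ((1 - phat) / (1 - q₂)) * Real.sqrt (q₂ / phat)) * D
      = α / 2 * ((1 - phat) / (1 - q₂)) := by
    rw [hDsq, show ((Real.sqrt α / 2) * ((1 - phat) / (1 - q₂)) * Real.sqrt (q₂ / phat)) *
      (Real.sqrt α * Real.sqrt (phat / q₂))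
      = (Real.sqrt α * Real.sqrt α / 2) * ((1 - phat) / (1 - q₂)) *
        (Real.sqrt (q₂ / phat) * Real.sqrt (phat / q₂)) from by ring, hαα, hqp]
    ring
  have hγeq : γhat = (Real.sqrt α / 2) * ((1 - phat) / (1 - q₂)) * Real.sqrt (q₂ / phat) :=
    mul_right_cancel₀ hD.ne' (hγD.trans hRD.symm)
  refine ⟨hγeq, ?_⟩
  have h2γ : 2 * γhat = Real.sqrt α * ((1 - phat) / (1 - q₂)) * Real.sqrt (q₂ / phat) := by
    rw [hγeq]; ring
  have hkey : c₂ * r₂ * (1 - phat) = Real.sqrt α * Real.sqrt (phat / q₂)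
      - Real.sqrt α * ((1 - phat) / (1 - q₂)) * Real.sqrt (q₂ / phat) := by
    rw [← hDsq, ← h2γ, hDdef]; ring
  exact aux_c2 c₂ r₂ phat q₂ _ _ _ hr.ne' hp1'.ne' hq1'.ne' hkey
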